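/- Let W be a graphon such that the supremum L = sup{k ∈ ℕ : t(K_k, W) > 0} is finite and L ≥ 2, and assume t(K_L,W) > 0. Then there exists a measurable set B ⊆ Ω of positive measure such that W restricted to B × B is 0 almost everywhere. -/

import Mathlib

open MeasureTheory

/-- The homomorphism density `t(K_k, W)` of the complete graph `K_k` in a graphon `W`. -/
noncomputable def cliqueDensity {Ω : Type*} [MeasurableSpace Ω] (μ : Measure Ω)
    (W : Ω → Ω → ℝ) (k : ℕ) : ENNReal :=
  ∫⁻ x : Fin k → Ω,
      ∏ p ∈ Finset.univ.filter (fun p : Fin k × Fin k => p.1 < p.2),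
        ENNReal.ofReal (W (x p.1) (x p.2))
    ∂(Measure.pi fun _ => μ)

namespace ZeroBlockAux

open Finset

variable {Ω : Type*} [MeasurableSpace Ω]

/-- The clique weight of a `k`-tuple. -/
noncomputable def cliqueFun (W : Ω → Ω → ℝ) (k : ℕ) (x : Fin k → Ω) : ENNReal :=
  ∏ p ∈ Finset.univ.filter (fun p : Fin k × Fin k => p.1 < p.2),
    ENNReal.ofReal (W (x p.1) (x p.2))

/-- The common-neighborhood weight of a `k`-tuple at a point `y`. -/
noncomputable def nbhdFun (W : Ω → Ω → ℝ) (k : ℕ) (x : Fin k → Ω) (y : Ω) : ENNReal :=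
  ∏ i : Fin k, ENNReal.ofReal (W (x i) y)

lemma cliqueDensity_eq (μ : Measure Ω) (W : Ω → Ω → ℝ) (k : ℕ) :
    cliqueDensity μ W k = ∫⁻ x, cliqueFun W k x ∂(Measure.pi fun _ : Fin k => μ) := rfl

lemma cliqueFun_eq (W : Ω → Ω → ℝ) (k : ℕ) (x : Fin k → Ω) :
    cliqueFun W k x
      = ∏ j : Fin k, ∏ i ∈ Finset.univ.filter (fun i => i < j),
          ENNReal.ofReal (W (x i) (x j)) := by
  rw [cliqueFun]
  exact Finset.prod_finset_product_right'
    (f := fun i j => ENNReal.ofReal (W (x i) (x j)))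
    (Finset.univ.filter (fun p : Fin k × Fin k => p.1 < p.2)) Finset.univ
    (fun j => Finset.univ.filter (fun i => i < j)) (by simp)

lemma filter_lt_castSucc {k : ℕ} (j : Fin k) :
    (Finset.univ : Finset (Fin (k+1))).filter (fun i => i < j.castSucc)
      = ((Finset.univ : Finset (Fin k)).filter (fun i => i < j)).image Fin.castSucc := by
  ext i
  simp only [mem_filter, mem_univ, true_and, mem_image]
  constructor
  · intro h
    have h' : (i : ℕ) < (j : ℕ) := h
    have hik : (i : ℕ) < k := h'.trans j.isLt
    exact ⟨⟨(i : ℕ), hik⟩, h', Fin.ext rfl⟩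
  · rintro ⟨a, ha, rfl⟩
    exact Fin.castSucc_lt_castSucc_iff.mpr ha

lemma filter_lt_last {k : ℕ} :
    (Finset.univ : Finset (Fin (k+1))).filter (fun i => i < Fin.last k)
      = (Finset.univ : Finset (Fin k)).image Fin.castSucc := by
  ext i
  simp only [mem_filter, mem_univ, true_and, mem_image]
  constructor
  · intro h
    have hik : (i : ℕ) < k := h
    exact ⟨⟨(i : ℕ), hik⟩, Fin.ext rfl⟩
  · rintro ⟨a, rfl⟩
    exact Fin.castSucc_lt_last a

lemma cliqueFun_snoc (W : Ω → Ω → ℝ) (k : ℕ) (x : Fin k → Ω) (y : Ω) :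
    cliqueFun W (k+1) (Fin.snoc x y) = cliqueFun W k x * nbhdFun W k x y := by
  rw [cliqueFun_eq, cliqueFun_eq, Fin.prod_univ_castSucc]
  congr 1
  · refine Finset.prod_congr rfl fun j _ => ?_
    rw [filter_lt_castSucc, Finset.prod_image
      (fun a _ b _ h => Fin.castSucc_injective _ h)]
    simp
  · rw [filter_lt_last, Finset.prod_image (fun a _ b _ h => Fin.castSucc_injective _ h)]
    simp [nbhdFun]

lemma nbhdFun_snoc (W : Ω → Ω → ℝ) (k : ℕ) (x : Fin k → Ω) (y z : Ω) :
    nbhdFun W (k+1) (Fin.snoc x y) z = nbhdFun W k x z * ENNReal.ofReal (W y z) := by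
  simp [nbhdFun, Fin.prod_univ_castSucc]

variable {W : Ω → Ω → ℝ}

lemma measurable_ofReal_W {α : Type*} [MeasurableSpace α]
    (hW : Measurable (Function.uncurry W)) {f g : α → Ω}
    (hf : Measurable f) (hg : Measurable g) :
    Measurable fun a => ENNReal.ofReal (W (f a) (g a)) := by
  apply ENNReal.measurable_ofReal.comp
  have h : Measurable fun a => (f a, g a) := hf.prodMk hg
  exact hW.comp h

lemma measurable_cliqueFun (hW : Measurable (Function.uncurry W)) (k : ℕ) :
    Measurable (cliqueFun W k) :=
  Finset.measurable_prod _ fun p _ =>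
    measurable_ofReal_W hW (measurable_pi_apply p.1) (measurable_pi_apply p.2)

lemma measurable_nbhdFun (hW : Measurable (Function.uncurry W)) (k : ℕ) :
    Measurable (fun q : (Fin k → Ω) × Ω => nbhdFun W k q.1 q.2) :=
  Finset.measurable_prod _ fun i _ =>
    measurable_ofReal_W hW ((measurable_pi_apply i).comp measurable_fst) measurable_snd

lemma lintegral_snoc (μ : Measure Ω) [SigmaFinite μ] {k : ℕ} {f : (Fin (k+1) → Ω) → ENNReal}
    (hf : Measurable f) :
    ∫⁻ x, f x ∂(Measure.pi fun _ : Fin (k+1) => μ)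
      = ∫⁻ y, ∫⁻ x, f (Fin.snoc x y) ∂(Measure.pi fun _ : Fin k => μ) ∂μ := by
  have hmp := measurePreserving_piFinSuccAbove (fun _ : Fin (k+1) => μ) (Fin.last k)
  have hmeas : Measurable fun p : Ω × (Fin k → Ω) => f (Fin.snoc p.2 p.1) := by
    refine hf.comp (measurable_pi_iff.2 fun j => ?_)
    induction j using Fin.lastCases with
    | last => simpa using measurable_fst
    | cast i => simpa [Function.comp_def] using (measurable_pi_apply i).comp measurable_snd
  calc ∫⁻ x, f x ∂(Measure.pi fun _ : Fin (k+1) => μ)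
      = ∫⁻ p, f (Fin.snoc p.2 p.1)
          ∂(μ.prod (Measure.pi fun _ : Fin k => μ)) := by
        rw [← hmp.lintegral_comp hmeas]
        refine lintegral_congr fun a => ?_
        congr 1
        ext j
        induction j using Fin.lastCases with
        | last => simp [MeasurableEquiv.piFinSuccAbove]
        | cast i =>
          simp [MeasurableEquiv.piFinSuccAbove, Fin.succAbove_last, Fin.init]
    _ = _ := lintegral_prod _ hmeas.aemeasurable

lemma cliqueDensity_succ (μ : Measure Ω) [SigmaFinite μ]
    (hW : Measurable (Function.uncurry W)) (k : ℕ) :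
    cliqueDensity μ W (k+1)
      = ∫⁻ y, ∫⁻ x, cliqueFun W k x * nbhdFun W k x y
          ∂(Measure.pi fun _ : Fin k => μ) ∂μ := by
  rw [cliqueDensity_eq, lintegral_snoc μ (measurable_cliqueFun hW (k+1))]
  simp only [cliqueFun_snoc]

end ZeroBlockAux

open ZeroBlockAux

set_option maxHeartbeats 1000000 in
/-- If `L = sup{k : t(K_k, W) > 0}` is finite with `L ≥ 2` and `t(K_L, W) > 0`, then
there is a positive-measure set `B` with `W = 0` a.e. on `B × B`. -/
theorem exists_zero_block {Ω : Type*} [MeasurableSpace Ω] [StandardBorelSpace Ω]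
    (μ : Measure Ω) [IsProbabilityMeasure μ] [NullSingletonClass μ]
    (W : Ω → Ω → ℝ) (hW : Measurable (Function.uncurry W))
    (hsymm : ∀ x y, W x y = W y x) (h0 : ∀ x y, 0 ≤ W x y) (h1 : ∀ x y, W x y ≤ 1)
    (L : ℕ) (hL2 : 2 ≤ L) (hLpos : 0 < cliqueDensity μ W L)
    (hLsup : ∀ k, L < k → cliqueDensity μ W k = 0) :
    ∃ B : Set Ω, MeasurableSet B ∧ 0 < μ B ∧
      ∀ᵐ z ∂(μ.prod μ), z.1 ∈ B → z.2 ∈ B → W z.1 z.2 = 0 := by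
  classical
  obtain ⟨n, rfl⟩ : ∃ n, L = n + 1 := ⟨L - 1, by omega⟩
  set π : Measure (Fin n → Ω) := Measure.pi fun _ => μ with hπdef
  set F : (Fin n → Ω) → ENNReal := cliqueFun W n with hFdef
  set G : (Fin n → Ω) → Ω → ENNReal := nbhdFun W n with hGdef
  have hFm : Measurable F := measurable_cliqueFun hW n
  have hGm : Measurable fun q : (Fin n → Ω) × Ω => G q.1 q.2 := measurable_nbhdFun hW n
  have hGx : ∀ x, Measurable (G x) := fun x => by
    have h : Measurable fun y : Ω => ((x, y) : (Fin n → Ω) × Ω) :=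
      measurable_const.prodMk measurable_id
    exact hGm.comp h
  have hK : Measurable fun r : ((Fin n → Ω) × Ω) × Ω =>
      G r.1.1 r.2 * (G r.1.1 r.1.2 * ENNReal.ofReal (W r.2 r.1.2)) := by
    have h1m : Measurable fun r : ((Fin n → Ω) × Ω) × Ω => G r.1.1 r.2 :=
      hGm.comp (measurable_fst.fst.prodMk measurable_snd)
    have h2m : Measurable fun r : ((Fin n → Ω) × Ω) × Ω => G r.1.1 r.1.2 :=
      hGm.comp (measurable_fst.fst.prodMk measurable_fst.snd)
    have h3m : Measurable fun r : ((Fin n → Ω) × Ω) × Ω => ENNReal.ofReal (W r.2 r.1.2) :=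
      measurable_ofReal_W hW measurable_snd measurable_fst.snd
    exact h1m.mul (h2m.mul h3m)
  have hD1 : Measurable fun q : (Fin n → Ω) × Ω =>
      ∫⁻ y, G q.1 y * (G q.1 q.2 * ENNReal.ofReal (W y q.2)) ∂μ :=
    hK.lintegral_prod_right'
  set D : (Fin n → Ω) → ENNReal :=
    fun x => ∫⁻ z, ∫⁻ y, G x y * (G x z * ENNReal.ofReal (W y z)) ∂μ ∂μ with hDdef
  have hDm : Measurable D := hD1.lintegral_prod_right'
  set J : (Fin n → Ω) → ENNReal := fun x => ∫⁻ y, G x y ∂μ with hJdef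
  have hJm : Measurable J := hGm.lintegral_prod_right'
  -- (A): t(K_{n+1}) = ∫ F * J
  have hA : cliqueDensity μ W (n+1) = ∫⁻ x, F x * J x ∂π := by
    rw [cliqueDensity_succ μ hW n]
    have hm : Measurable fun q : Ω × (Fin n → Ω) => F q.2 * G q.2 q.1 :=
      (hFm.comp measurable_snd).mul (hGm.comp (measurable_snd.prodMk measurable_fst))
    rw [lintegral_lintegral_swap hm.aemeasurable]
    exact lintegral_congr fun x => lintegral_const_mul _ (hGx x)
  -- (B): t(K_{n+2}) = ∫ F * D
  have hB : cliqueDensity μ W (n+2) = ∫⁻ x, F x * D x ∂π := by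
    rw [show (n+2) = (n+1)+1 from rfl, cliqueDensity_succ μ hW (n+1)]
    have step1 : ∀ z : Ω,
        (∫⁻ x', cliqueFun W (n+1) x' * nbhdFun W (n+1) x' z
            ∂(Measure.pi fun _ : Fin (n+1) => μ))
          = ∫⁻ y, ∫⁻ x, (F x * G x y) * (G x z * ENNReal.ofReal (W y z)) ∂π ∂μ := by
      intro z
      have hm1 : Measurable fun x' : Fin (n+1) → Ω =>
          cliqueFun W (n+1) x' * nbhdFun W (n+1) x' z := by
        refine (measurable_cliqueFun hW (n+1)).mul ?_
        have h : Measurable fun x' : Fin (n+1) → Ω => ((x', z) : (Fin (n+1) → Ω) × Ω) :=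
          measurable_id.prodMk measurable_const
        exact (measurable_nbhdFun hW (n+1)).comp h
      rw [lintegral_snoc μ hm1]
      exact lintegral_congr fun y => lintegral_congr fun x => by
        rw [cliqueFun_snoc, nbhdFun_snoc]
    simp only [step1]
    have swap1 : ∀ z : Ω,
        (∫⁻ y, ∫⁻ x, (F x * G x y) * (G x z * ENNReal.ofReal (W y z)) ∂π ∂μ)
          = ∫⁻ x, ∫⁻ y, (F x * G x y) * (G x z * ENNReal.ofReal (W y z)) ∂μ ∂π := by
      intro z
      have hm : Measurable fun q : Ω × (Fin n → Ω) =>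
          (F q.2 * G q.2 q.1) * (G q.2 z * ENNReal.ofReal (W q.1 z)) := by
        refine ((hFm.comp measurable_snd).mul
          (hGm.comp (measurable_snd.prodMk measurable_fst))).mul ?_
        exact (hGm.comp (measurable_snd.prodMk measurable_const)).mul
          (measurable_ofReal_W hW measurable_fst measurable_const)
      exact lintegral_lintegral_swap hm.aemeasurable
    simp only [swap1]
    have hKB : Measurable fun r : (Ω × (Fin n → Ω)) × Ω =>
        (F r.1.2 * G r.1.2 r.2) * (G r.1.2 r.1.1 * ENNReal.ofReal (W r.2 r.1.1)) := by
      refine ((hFm.comp measurable_fst.snd).mul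
        (hGm.comp (measurable_fst.snd.prodMk measurable_snd))).mul ?_
      exact (hGm.comp (measurable_fst.snd.prodMk measurable_fst.fst)).mul
        (measurable_ofReal_W hW measurable_snd measurable_fst.fst)
    have hm2 : Measurable fun q : Ω × (Fin n → Ω) =>
        ∫⁻ y, (F q.2 * G q.2 y) * (G q.2 q.1 * ENNReal.ofReal (W y q.1)) ∂μ :=
      hKB.lintegral_prod_right'
    rw [lintegral_lintegral_swap hm2.aemeasurable]
    refine lintegral_congr fun x => ?_
    have hinner : ∀ z, (∫⁻ y, (F x * G x y) * (G x z * ENNReal.ofReal (W y z)) ∂μ)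
        = F x * ∫⁻ y, G x y * (G x z * ENNReal.ofReal (W y z)) ∂μ := by
      intro z
      have hmy : Measurable fun y => G x y * (G x z * ENNReal.ofReal (W y z)) :=
        (hGx x).mul (measurable_const.mul
          (measurable_ofReal_W hW measurable_id measurable_const))
      rw [← lintegral_const_mul _ hmy]
      exact lintegral_congr fun y => by rw [mul_assoc]
    simp only [hinner]
    have hmz : Measurable fun z => ∫⁻ y, G x y * (G x z * ENNReal.ofReal (W y z)) ∂μ := by
      have h : Measurable fun z : Ω => ((x, z) : (Fin n → Ω) × Ω) :=
        measurable_const.prodMk measurable_id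
      exact hD1.comp h
    rw [lintegral_const_mul _ hmz]
  -- t(K_{n+2}) = 0
  have hzero : (∫⁻ x, F x * D x ∂π) = 0 := by
    rw [← hB]; exact hLsup (n+2) (by omega)
  have hae : ∀ᵐ x ∂π, F x * D x = 0 :=
    (lintegral_eq_zero_iff (hFm.mul hDm)).mp hzero
  have hN : π {x | ¬ F x * D x = 0} = 0 := MeasureTheory.ae_iff.mp hae
  -- positive measure set where F * J ≠ 0
  have hTpos : π {x | F x * J x ≠ 0} ≠ 0 := by
    intro hcon
    have h' : (∫⁻ x, F x * J x ∂π) = 0 := by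
      exact (lintegral_eq_zero_iff (hFm.mul hJm)).mpr hcon
    rw [hA] at hLpos
    exact hLpos.ne' h'
  obtain ⟨x₀, hx₀T, hx₀N⟩ :
      ∃ x₀, (F x₀ * J x₀ ≠ 0) ∧ ¬ (F x₀ * D x₀ ≠ 0) := by
    have hdiff : π ({x | F x * J x ≠ 0} \ {x | ¬ F x * D x = 0}) ≠ 0 := by
      intro hc
      apply hTpos
      refine le_antisymm ?_ zero_le
      calc π {x | F x * J x ≠ 0}
          ≤ π (({x | F x * J x ≠ 0} \ {x | ¬ F x * D x = 0}) ∪ {x | ¬ F x * D x = 0}) :=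
            measure_mono fun x hx => by
              by_cases h : F x * D x = 0
              · exact Or.inl ⟨hx, fun hc' => hc' h⟩
              · exact Or.inr h
        _ ≤ _ := measure_union_le _ _
        _ = 0 := by rw [hc, hN, add_zero]
    obtain ⟨x₀, hx₀⟩ := MeasureTheory.nonempty_of_measure_ne_zero hdiff
    exact ⟨x₀, hx₀.1, hx₀.2⟩
  have hFx₀ : F x₀ ≠ 0 := fun h => hx₀T (by rw [h, zero_mul])
  have hJx₀ : J x₀ ≠ 0 := fun h => hx₀T (by rw [h, mul_zero])
  have hDx₀ : D x₀ = 0 := by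
    rcases mul_eq_zero.mp (not_not.mp hx₀N) with h | h
    · exact absurd h hFx₀
    · exact h
  -- the zero block
  refine ⟨{y | G x₀ y ≠ 0}, ?_, ?_, ?_⟩
  · have hset : {y | G x₀ y ≠ 0} = (G x₀ ⁻¹' {0})ᶜ := by ext y; simp [Set.mem_setOf_eq]
    rw [hset]
    exact ((hGx x₀) (measurableSet_singleton 0)).compl
  · rcases eq_or_lt_of_le (zero_le : 0 ≤ μ {y | G x₀ y ≠ 0}) with h | h
    · exfalso
      apply hJx₀
      have hGae : G x₀ =ᵐ[μ] 0 := by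
        rw [Filter.EventuallyEq, MeasureTheory.ae_iff]
        simpa using h.symm
      show (∫⁻ y, G x₀ y ∂μ) = 0
      simpa using lintegral_congr_ae hGae
    · exact h
  · have hfprod : Measurable fun p : Ω × Ω =>
        G x₀ p.2 * (G x₀ p.1 * ENNReal.ofReal (W p.2 p.1)) := by
      have h : Measurable fun p : Ω × Ω => ((((x₀, p.1) : (Fin n → Ω) × Ω), p.2) :
          ((Fin n → Ω) × Ω) × Ω) :=
        (measurable_const.prodMk measurable_fst).prodMk measurable_snd
      exact hK.comp h
    have hD0 : (∫⁻ p, G x₀ p.2 * (G x₀ p.1 * ENNReal.ofReal (W p.2 p.1)) ∂(μ.prod μ)) = 0 := by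
      rw [lintegral_prod _ hfprod.aemeasurable]
      exact hDx₀
    have haep := (lintegral_eq_zero_iff hfprod).mp hD0
    filter_upwards [haep] with p hp h1p h2p
    simp only [Pi.zero_apply] at hp
    rcases mul_eq_zero.mp hp with h | h
    · exact absurd h h2p
    rcases mul_eq_zero.mp h with h | h
    · exact absurd h h1p
    · have hle : W p.2 p.1 ≤ 0 := ENNReal.ofReal_eq_zero.mp h
      have heq : W p.2 p.1 = 0 := le_antisymm hle (h0 p.2 p.1)
      rw [hsymm]; exact heq
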